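/- Let p : X → Y be a quasi-Galoisian branched covering with Γ(X/Y) countable, and b ∈ Y a point with a countable basis (U_n) of connected neighborhoods. Then the following are equivalent: (i) the fiber p⁻¹(b) is discrete; (ii) p⁻¹(b) is countable; (iii) Γ(X/Y) acts transitively on p⁻¹(b). -/

import Mathlib

/-- A subset `U` of a topological space `X` is *portly* if it is open, dense, and
locally connected in `X`. -/
def Portly (X : Type*) [TopologicalSpace X] (U : Set X) : Prop :=
  IsOpen U ∧ Dense U ∧ ∀ W : Set X, IsOpen W → IsConnected W → IsConnected (W ∩ U)

/-- `V` is a connected component of `S`. -/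
def IsComponentOf {X : Type*} [TopologicalSpace X] (V S : Set X) : Prop :=
  ∃ x ∈ S, V = connectedComponentIn S x

/-- A *spread* is a continuous map such that the connected components of preimages of
open subsets of the base form a basis for the topology of the total space. -/
def IsSpread {X Y : Type*} [TopologicalSpace X] [TopologicalSpace Y] (p : X → Y) : Prop :=
  Continuous p ∧ TopologicalSpace.IsTopologicalBasis
    {V : Set X | ∃ U : Set Y, IsOpen U ∧ IsComponentOf V (p ⁻¹' U)}

/-- `p` maps `V` homeomorphically onto `U`. -/
def MapsHomeomorphicallyOnto {X Y : Type*} [TopologicalSpace X] [TopologicalSpace Y]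
    (p : X → Y) (V : Set X) (U : Set Y) : Prop :=
  ∃ h : V ≃ₜ U, ∀ v : V, (h v : Y) = p v

/-- The ordinary locus in the base of a spread: points admitting an open neighborhood
evenly covered by `p`. -/
def OrdBase {X Y : Type*} [TopologicalSpace X] [TopologicalSpace Y] (p : X → Y) : Set Y :=
  {y | ∃ U : Set Y, IsOpen U ∧ y ∈ U ∧
    ∀ V : Set X, IsComponentOf V (p ⁻¹' U) → MapsHomeomorphicallyOnto p V U}

/-- The ordinary locus in the total space of a spread. -/
def OrdTotal {X Y : Type*} [TopologicalSpace X] [TopologicalSpace Y] (p : X → Y) : Set X :=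
  p ⁻¹' OrdBase p

/-- A *complete* spread: every monotone choice of connected components of preimages of
connected open neighborhoods of a point of the closure of the image has nonempty
intersection. -/
def IsCompleteSpread {X Y : Type*} [TopologicalSpace X] [TopologicalSpace Y]
    (p : X → Y) : Prop :=
  IsSpread p ∧ ∀ y ∈ closure (Set.range p),
    ∀ χ : {U : Set Y // IsOpen U ∧ IsConnected U ∧ y ∈ U} → Set X,
      (∀ U, IsComponentOf (χ U) (p ⁻¹' U.1)) →
      (∀ U V, U.1 ⊆ V.1 → χ U ⊆ χ V) →
      (⋂ U, χ U).Nonempty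

/-- A *branched covering* is a complete surjective spread between connected spaces whose
ordinary loci are portly. -/
def IsBranchedCovering {X Y : Type*} [TopologicalSpace X] [TopologicalSpace Y]
    (p : X → Y) : Prop :=
  IsCompleteSpread p ∧ Function.Surjective p ∧ ConnectedSpace X ∧ ConnectedSpace Y ∧
    Portly X (OrdTotal p) ∧ Portly Y (OrdBase p)

/-- A branched covering is *quasi-Galoisian* if its automorphism group acts transitively
on the connected components of the preimage of every open subset of the base. -/
def QuasiGaloisian {X Y : Type*} [TopologicalSpace X] [TopologicalSpace Y]
    (p : X → Y) : Prop :=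
  IsBranchedCovering p ∧ ∀ U : Set Y, IsOpen U → ∀ V W : Set X,
    IsComponentOf V (p ⁻¹' U) → IsComponentOf W (p ⁻¹' U) →
    ∃ φ : X ≃ₜ X, (∀ z, p (φ z) = p z) ∧ φ '' V = W

open Set

lemma key_isolated {X Y : Type*} [TopologicalSpace X] [TopologicalSpace Y]
    [T2Space X] [T1Space Y]
    (p : X → Y) (hps : IsCompleteSpread p) (b : Y) (hb : ∃ x, p x = b)
    (U : ℕ → Set Y) (hUo : ∀ n, IsOpen (U n)) (hUc : ∀ n, IsConnected (U n))
    (hUb : ∀ n, b ∈ U n) (hUanti : Antitone U)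
    (hUbasis : ∀ W ∈ nhds b, ∃ n, U n ⊆ W)
    (hcnt : (p ⁻¹' {b}).Countable) :
    ∃ x₀, p x₀ = b ∧ ∃ n, ∀ y, p y = b →
      y ∈ connectedComponentIn (p ⁻¹' U n) x₀ → y = x₀ := by
  classical
  by_contra hno
  push_neg at hno
  -- hno : ∀ x₀, p x₀ = b → ∀ n, ∃ y, p y = b ∧ y ∈ comp ∧ y ≠ x₀
  obtain ⟨z0, hz0⟩ := hb
  -- antitone components
  have hVanti : ∀ (x : X) {a c : ℕ}, a ≤ c →
      connectedComponentIn (p ⁻¹' U c) x ⊆ connectedComponentIn (p ⁻¹' U a) x :=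
    fun x _ _ h => connectedComponentIn_mono x (Set.preimage_mono (hUanti h))
  have hmemV : ∀ (x : X), p x = b → ∀ n, x ∈ connectedComponentIn (p ⁻¹' U n) x :=
    fun x hx n => mem_connectedComponentIn (by simp [Set.mem_preimage, hx, hUb n])
  -- neighborhood basis property
  have hC : ∀ x, p x = b → ∀ O : Set X, IsOpen O → x ∈ O →
      ∃ n, connectedComponentIn (p ⁻¹' U n) x ⊆ O := by
    intro x hx O hO hxO
    obtain ⟨V, hVmem, hxV, hVO⟩ := hps.1.2.exists_subset_of_mem_open hxO hO
    obtain ⟨W, hWo, x₁, hx₁, hVeq⟩ := hVmem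
    have hVx : V = connectedComponentIn (p ⁻¹' W) x := by
      rw [hVeq] at hxV ⊢; exact connectedComponentIn_eq hxV
    have hbW : b ∈ W := by
      have hxW : x ∈ p ⁻¹' W :=
        connectedComponentIn_subset _ _ (hVx ▸ hxV)
      exact hx ▸ hxW
    obtain ⟨n, hn⟩ := hUbasis W (hWo.mem_nhds hbW)
    exact ⟨n, (connectedComponentIn_mono x (Set.preimage_mono hn)).trans (hVx ▸ hVO)⟩
  -- separation
  have hD : ∀ x y, p x = b → p y = b → x ≠ y → ∃ n,
      connectedComponentIn (p ⁻¹' U n) x ∩ connectedComponentIn (p ⁻¹' U n) y = ∅ := by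
    intro x y hx hy hxy
    obtain ⟨Ox, Oy, hOx, hOy, hxOx, hyOy, hdisj⟩ := t2_separation hxy
    obtain ⟨n₁, hn₁⟩ := hC x hx Ox hOx hxOx
    obtain ⟨n₂, hn₂⟩ := hC y hy Oy hOy hyOy
    refine ⟨max n₁ n₂, Set.eq_empty_of_forall_notMem fun w ⟨hw1, hw2⟩ => ?_⟩
    exact Set.disjoint_iff.mp hdisj ⟨hn₁ (hVanti x (le_max_left _ _) hw1),
      hn₂ (hVanti y (le_max_right _ _) hw2)⟩
  -- enumeration of the fiber
  obtain ⟨e, he⟩ := hcnt.exists_eq_range ⟨z0, by simp [hz0]⟩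
  have heb : ∀ k, p (e k) = b := by
    intro k
    have : e k ∈ p ⁻¹' {b} := he ▸ Set.mem_range_self k
    exact this
  -- the recursive construction
  have hstep : ∀ (k : ℕ) (s : {q : X × ℕ // p q.1 = b}),
      ∃ t : {q : X × ℕ // p q.1 = b},
        s.1.2 < t.1.2 ∧ t.1.1 ∈ connectedComponentIn (p ⁻¹' U s.1.2) s.1.1 ∧
        connectedComponentIn (p ⁻¹' U t.1.2) t.1.1 ∩
          connectedComponentIn (p ⁻¹' U t.1.2) (e k) = ∅ := by
    rintro k ⟨⟨z, m⟩, hz⟩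
    have : ∃ z', p z' = b ∧ z' ∈ connectedComponentIn (p ⁻¹' U m) z ∧ z' ≠ e k := by
      by_cases hze : z = e k
      · obtain ⟨y, hy1, hy2, hy3⟩ := hno z hz m
        exact ⟨y, hy1, hy2, hze ▸ hy3⟩
      · exact ⟨z, hz, hmemV z hz m, hze⟩
    obtain ⟨z', hz', hz'mem, hz'ne⟩ := this
    obtain ⟨n₀, hn₀⟩ := hD z' (e k) hz' (heb k) hz'ne
    refine ⟨⟨(z', max n₀ (m + 1)), hz'⟩, lt_of_lt_of_le (Nat.lt_succ_self m) (le_max_right _ _), hz'mem, ?_⟩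
    apply Set.eq_empty_of_forall_notMem
    rintro w ⟨hw1, hw2⟩
    exact (Set.eq_empty_iff_forall_notMem.mp hn₀ w)
      ⟨hVanti z' (le_max_left _ _) hw1, hVanti (e k) (le_max_left _ _) hw2⟩
  choose step hstep1 hstep2 hstep3 using hstep
  let g : ℕ → {q : X × ℕ // p q.1 = b} :=
    fun k => Nat.rec (motive := fun _ => {q : X × ℕ // p q.1 = b})
      ⟨(z0, 0), hz0⟩ (fun k ih => step k ih) k
  set z : ℕ → X := fun k => (g k).1.1 with hzdef
  set m : ℕ → ℕ := fun k => (g k).1.2 with hmdef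
  have hzb : ∀ k, p (z k) = b := fun k => (g k).2
  have hg : ∀ k, g (k + 1) = step k (g k) := fun k => rfl
  have hmlt : ∀ k, m k < m (k + 1) := fun k => hstep1 k (g k)
  have hchain : ∀ k, z (k + 1) ∈ connectedComponentIn (p ⁻¹' U (m k)) (z k) :=
    fun k => hstep2 k (g k)
  have hsep : ∀ k, connectedComponentIn (p ⁻¹' U (m (k + 1))) (z (k + 1)) ∩
      connectedComponentIn (p ⁻¹' U (m (k + 1))) (e k) = ∅ := fun k => hstep3 k (g k)
  have hmmono : StrictMono m := strictMono_nat_of_lt_succ hmlt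
  -- nesting
  have hnest : ∀ k j, k ≤ j → z j ∈ connectedComponentIn (p ⁻¹' U (m k)) (z k) := by
    intro k j hkj
    induction j, hkj using Nat.le_induction with
    | base => exact hmemV (z k) (hzb k) (m k)
    | succ j hkj ih =>
      have h1 : z (j + 1) ∈ connectedComponentIn (p ⁻¹' U (m k)) (z j) :=
        hVanti (z j) (hmmono.le_iff_le.mpr hkj) (hchain j)
      rwa [← connectedComponentIn_eq ih] at h1
  have hcompeq : ∀ (W : Set Y) (k j : ℕ), k ≤ j → U (m k) ⊆ W →
      connectedComponentIn (p ⁻¹' W) (z j) = connectedComponentIn (p ⁻¹' W) (z k) := by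
    intro W k j hkj hsub
    have : z j ∈ connectedComponentIn (p ⁻¹' W) (z k) :=
      connectedComponentIn_mono (z k) (Set.preimage_mono hsub) (hnest k j hkj)
    exact (connectedComponentIn_eq this).symm
  -- the thread
  have hK : ∀ Us : {V : Set Y // IsOpen V ∧ IsConnected V ∧ b ∈ V}, ∃ n, U n ⊆ Us.1 :=
    fun Us => hUbasis Us.1 (Us.2.1.mem_nhds Us.2.2.2)
  choose K hKsub using hK
  have hKm : ∀ Us, U (m (K Us)) ⊆ Us.1 :=
    fun Us => (hUanti (hmmono.le_apply)).trans (hKsub Us)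
  set χ : {V : Set Y // IsOpen V ∧ IsConnected V ∧ b ∈ V} → Set X :=
    fun Us => connectedComponentIn (p ⁻¹' Us.1) (z (K Us)) with hχdef
  have hbcl : b ∈ closure (Set.range p) := subset_closure ⟨z0, hz0⟩
  have hcompOf : ∀ Us, IsComponentOf (χ Us) (p ⁻¹' Us.1) :=
    fun Us => ⟨z (K Us), by simp [Set.mem_preimage, hzb, Us.2.2.2], rfl⟩
  have hmono : ∀ Us Vs, Us.1 ⊆ Vs.1 → χ Us ⊆ χ Vs := by
    intro Us Vs hUV
    have h1 : χ Us = connectedComponentIn (p ⁻¹' Us.1) (z (max (K Us) (K Vs))) :=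
      (hcompeq Us.1 (K Us) _ (le_max_left _ _) (hKm Us)).symm
    have h2 : χ Vs = connectedComponentIn (p ⁻¹' Vs.1) (z (max (K Us) (K Vs))) :=
      (hcompeq Vs.1 (K Vs) _ (le_max_right _ _) (hKm Vs)).symm
    rw [h1, h2]
    exact connectedComponentIn_mono _ (Set.preimage_mono hUV)
  obtain ⟨x, hx⟩ := hps.2 b hbcl χ hcompOf hmono
  have hxU : ∀ Us, x ∈ χ Us := Set.mem_iInter.mp hx
  -- p x = b
  have hpx : p x = b := by
    by_contra hne
    have hbmem : b ∈ ({p x}ᶜ : Set Y) := fun h => hne (Set.mem_singleton_iff.mp h).symm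
    obtain ⟨n, hn⟩ := hUbasis {p x}ᶜ (isOpen_compl_singleton.mem_nhds hbmem)
    have h1 : x ∈ connectedComponentIn (p ⁻¹' U n) (z (K ⟨U n, hUo n, hUc n, hUb n⟩)) :=
      hxU ⟨U n, hUo n, hUc n, hUb n⟩
    have hxp : x ∈ p ⁻¹' U n := connectedComponentIn_subset _ _ h1
    exact hn hxp rfl
  -- x is in the fiber, hence some e k
  obtain ⟨k, hk⟩ := Set.mem_range.mp (he ▸ (by simp [Set.mem_preimage, hpx] :
    x ∈ p ⁻¹' {b}))
  set Us : {V : Set Y // IsOpen V ∧ IsConnected V ∧ b ∈ V} :=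
    ⟨U (m (k + 1)), hUo _, hUc _, hUb _⟩ with hUsdef
  have hx1 : x ∈ χ Us := hxU Us
  have hχeq : χ Us = connectedComponentIn (p ⁻¹' U (m (k + 1))) (z (k + 1)) := by
    have h1 : χ Us = connectedComponentIn (p ⁻¹' U (m (k + 1))) (z (max (K Us) (k + 1))) :=
      (hcompeq _ (K Us) _ (le_max_left _ _) (hKm Us)).symm
    have h2 : connectedComponentIn (p ⁻¹' U (m (k + 1))) (z (max (K Us) (k + 1)))
        = connectedComponentIn (p ⁻¹' U (m (k + 1))) (z (k + 1)) :=
      hcompeq _ (k + 1) _ (le_max_right _ _) (subset_refl _)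
    rw [h1, h2]
  rw [hχeq] at hx1
  have hx2 : x ∈ connectedComponentIn (p ⁻¹' U (m (k + 1))) (e k) :=
    hk ▸ hmemV (e k) (heb k) (m (k + 1))
  exact Set.eq_empty_iff_forall_notMem.mp (hsep k) x ⟨hx1, hx2⟩

theorem stmt16 {X Y : Type*} [TopologicalSpace X] [TopologicalSpace Y]
    [T2Space X] [T2Space Y] [FirstCountableTopology X] [FirstCountableTopology Y]
    [SecondCountableTopology X] [SecondCountableTopology Y]
    [LocallyPathConnectedSpace X] [LocallyPathConnectedSpace Y]
    (p : X → Y) (hp : QuasiGaloisian p)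
    (hΓ : Countable {φ : X ≃ₜ X // ∀ z, p (φ z) = p z})
    (b : Y) (Un : ℕ → Set Y)
    (hUn : ∀ n, IsOpen (Un n) ∧ IsConnected (Un n) ∧ b ∈ Un n)
    (hbasis : ∀ W ∈ nhds b, ∃ n, Un n ⊆ W) :
    (DiscreteTopology (p ⁻¹' {b}) ↔ (p ⁻¹' {b}).Countable) ∧
    (DiscreteTopology (p ⁻¹' {b}) ↔
      ∀ x ∈ p ⁻¹' {b}, ∀ y ∈ p ⁻¹' {b},
        ∃ φ : X ≃ₜ X, (∀ z, p (φ z) = p z) ∧ φ x = y) := by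
  classical
  have hsurj : Function.Surjective p := hp.1.2.1
  have pcont : Continuous p := hp.1.1.1.1
  -- normalized decreasing basis of connected open neighborhoods of b
  set S : ℕ → Set Y := fun n => ⋂ i ∈ Set.Iic n, Un i with hSdef
  have hSopen : ∀ n, IsOpen (S n) :=
    fun n => (Set.finite_Iic n).isOpen_biInter fun i _ => (hUn i).1
  have hSb : ∀ n, b ∈ S n := fun n => Set.mem_iInter₂.mpr fun i _ => (hUn i).2.2
  have hSanti : Antitone S := by
    intro a c hac x hx
    exact Set.mem_iInter₂.mpr fun i hi => Set.mem_iInter₂.mp hx i (le_trans hi hac)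
  set U : ℕ → Set Y := fun n => connectedComponentIn (S n) b with hUdef
  have hUo : ∀ n, IsOpen (U n) := fun n => (hSopen n).connectedComponentIn
  have hUc : ∀ n, IsConnected (U n) :=
    fun n => isConnected_connectedComponentIn_iff.mpr (hSb n)
  have hUb : ∀ n, b ∈ U n := fun n => mem_connectedComponentIn (hSb n)
  have hUanti : Antitone U := fun a c hac => connectedComponentIn_mono b (hSanti hac)
  have hUbasis : ∀ W ∈ nhds b, ∃ n, U n ⊆ W := by
    intro W hW
    obtain ⟨n, hn⟩ := hbasis W hW
    refine ⟨n, (connectedComponentIn_subset _ _).trans ?_⟩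
    exact (Set.biInter_subset_of_mem (Set.mem_Iic.mpr le_rfl)).trans hn
  -- main implication: countable → discrete ∧ transitive
  have h1 : (p ⁻¹' {b}).Countable →
      DiscreteTopology (p ⁻¹' {b}) ∧
      (∀ x ∈ p ⁻¹' {b}, ∀ y ∈ p ⁻¹' {b},
        ∃ φ : X ≃ₜ X, (∀ z, p (φ z) = p z) ∧ φ x = y) := by
    intro hcnt
    obtain ⟨x₀, hx₀b, n, hiso⟩ :=
      key_isolated p hp.1.1 b (hsurj b) U hUo hUc hUb hUanti hUbasis hcnt
    have hmove : ∀ y, p y = b → ∃ φ : X ≃ₜ X, (∀ z, p (φ z) = p z) ∧ φ y = x₀ := by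
      intro y hy
      obtain ⟨φ, hφp, hφim⟩ := hp.2 (U n) (hUo n)
        (connectedComponentIn (p ⁻¹' U n) y) (connectedComponentIn (p ⁻¹' U n) x₀)
        ⟨y, by simp [Set.mem_preimage, hy, hUb n], rfl⟩
        ⟨x₀, by simp [Set.mem_preimage, hx₀b, hUb n], rfl⟩
      have hyV : y ∈ connectedComponentIn (p ⁻¹' U n) y :=
        mem_connectedComponentIn (by simp [Set.mem_preimage, hy, hUb n])
      have hφy : φ y ∈ connectedComponentIn (p ⁻¹' U n) x₀ :=
        hφim ▸ Set.mem_image_of_mem φ hyV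
      exact ⟨φ, hφp, hiso (φ y) (by rw [hφp y, hy]) hφy⟩
    constructor
    · rw [discreteTopology_iff_isOpen_singleton]
      rintro ⟨y, hy⟩
      have hyb : p y = b := hy
      obtain ⟨φ, hφp, hφy⟩ := hmove y hyb
      have hVopen : IsOpen (connectedComponentIn (p ⁻¹' U n) x₀) :=
        ((hUo n).preimage pcont).connectedComponentIn
      have hOopen : IsOpen (φ ⁻¹' connectedComponentIn (p ⁻¹' U n) x₀) :=
        hVopen.preimage φ.continuous
      have hset : {(⟨y, hy⟩ : p ⁻¹' {b})} =
          Subtype.val ⁻¹' (φ ⁻¹' connectedComponentIn (p ⁻¹' U n) x₀) := by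
        ext ⟨w, hw⟩
        simp only [Set.mem_singleton_iff, Set.mem_preimage, Subtype.mk.injEq]
        constructor
        · rintro rfl; rw [hφy]
          exact mem_connectedComponentIn (by simp [Set.mem_preimage, hx₀b, hUb n])
        · intro hwV
          have hwb : p w = b := hw
          have : φ w = x₀ := hiso (φ w) (by rw [hφp w, hwb]) hwV
          exact φ.injective (by rw [this, hφy])
      rw [hset]
      exact hOopen.preimage continuous_subtype_val
    · intro x hx y hy
      obtain ⟨φ, hφp, hφx⟩ := hmove x hx
      obtain ⟨ψ, hψp, hψy⟩ := hmove y hy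
      have hψsym : ∀ w, p (ψ.symm w) = p w := by
        intro w
        have := hψp (ψ.symm w)
        rw [ψ.apply_symm_apply] at this
        exact this.symm
      refine ⟨φ.trans ψ.symm, fun w => ?_, ?_⟩
      · show p (ψ.symm (φ w)) = p w
        rw [hψsym (φ w), hφp w]
      · show ψ.symm (φ x) = y
        rw [hφx, ← hψy, ψ.symm_apply_apply]
  -- discrete → countable
  have h2 : DiscreteTopology (p ⁻¹' {b}) → (p ⁻¹' {b}).Countable := by
    intro hd
    have : Countable (p ⁻¹' {b} : Set X) := by
      have hsep : TopologicalSpace.SeparableSpace (p ⁻¹' {b} : Set X) := inferInstance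
      exact (TopologicalSpace.separableSpace_iff_countable).mp hsep
    exact Set.countable_coe_iff.mp this
  -- transitive → countable
  have h3 : (∀ x ∈ p ⁻¹' {b}, ∀ y ∈ p ⁻¹' {b},
      ∃ φ : X ≃ₜ X, (∀ z, p (φ z) = p z) ∧ φ x = y) → (p ⁻¹' {b}).Countable := by
    intro ht
    obtain ⟨x₀, hx₀⟩ := hsurj b
    have hx₀mem : x₀ ∈ p ⁻¹' {b} := hx₀
    haveI := hΓ
    have hsub : p ⁻¹' {b} ⊆
        Set.range (fun φ : {φ : X ≃ₜ X // ∀ z, p (φ z) = p z} => φ.1 x₀) := by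
      intro y hy
      obtain ⟨φ, hφp, hφx⟩ := ht x₀ hx₀mem y hy
      exact ⟨⟨φ, hφp⟩, hφx⟩
    exact (Set.countable_range _).mono hsub
  exact ⟨⟨h2, fun hc => (h1 hc).1⟩,
    ⟨fun hd => (h1 (h2 hd)).2, fun ht => (h1 (h3 ht)).1⟩⟩
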